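/- Let A be an n×n symmetric F_2-matrix (viewed in F_4) with zero diagonal, and let ω be an element of F_4 satisfying ω^2 = ω + 1. Then any two rows of the matrix A + ωI are orthogonal under the trace inner product; in particular, the additive F_4-code generated by the rows of A + ωI is self-orthogonal. -/

import Mathlib

/-- The rows of `A + ωI` are pairwise orthogonal under the trace inner product,
and the additive code they generate (the set of `F_2`-linear combinations of
the rows, i.e. sums of subsets of the rows) is self-orthogonal. -/
theorem rows_self_orthogonal {F : Type*} [Field F] [Fintype F]
    (hF : Fintype.card F = 4) (ω : F) (hω : ω ^ 2 = ω + 1)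
    {n : ℕ} (A : Matrix (Fin n) (Fin n) F)
    (h01 : ∀ i j, A i j = 0 ∨ A i j = 1)
    (hsymm : A.IsSymm) (hdiag : ∀ i, A i i = 0) :
    (∀ i j : Fin n,
      ∑ k, ((A + ω • (1 : Matrix (Fin n) (Fin n) F)) i k *
              ((A + ω • (1 : Matrix (Fin n) (Fin n) F)) j k) ^ 2 +
            ((A + ω • (1 : Matrix (Fin n) (Fin n) F)) i k) ^ 2 *
              (A + ω • (1 : Matrix (Fin n) (Fin n) F)) j k) = 0) ∧
    (∀ x ∈ AddSubgroup.closure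
        (Set.range fun i => fun k => (A + ω • (1 : Matrix (Fin n) (Fin n) F)) i k),
      ∀ y ∈ AddSubgroup.closure
        (Set.range fun i => fun k => (A + ω • (1 : Matrix (Fin n) (Fin n) F)) i k),
      ∑ k, (x k * y k ^ 2 + x k ^ 2 * y k) = 0) := by
  have h4 : ((Fintype.card F : ℕ) : F) = 0 := FiniteField.cast_card_eq_zero F
  rw [hF] at h4
  have h4' : (4 : F) = 0 := by exact_mod_cast h4
  have h2 : (2 : F) = 0 := by
    have : (2 : F) * 2 = 0 := by linear_combination h4'
    exact mul_self_eq_zero.mp this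
  set M := A + ω • (1 : Matrix (Fin n) (Fin n) F) with hM
  have hMval : ∀ i k, M i k = A i k + ω * (if i = k then 1 else 0) := by
    intro i k
    simp [hM, Matrix.add_apply, Matrix.smul_apply, Matrix.one_apply]
  have key : ∀ i j : Fin n, ∑ k, (M i k * M j k ^ 2 + M i k ^ 2 * M j k) = 0 := by
    intro i j
    by_cases hij : i = j
    · subst hij
      apply Finset.sum_eq_zero
      intro k _
      linear_combination (M i k ^ 3) * h2
    · have step : ∀ k, M i k * M j k ^ 2 + M i k ^ 2 * M j k =
          (if k = i then A i j else 0) + (if k = j then A i j else 0) := by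
        intro k
        rw [hMval, hMval]
        have hb : A j k ^ 2 = A j k := by rcases h01 j k with h | h <;> rw [h] <;> ring
        have ha : A i k ^ 2 = A i k := by rcases h01 i k with h | h <;> rw [h] <;> ring
        have hd : A i j ^ 2 = A i j := by rcases h01 i j with h | h <;> rw [h] <;> ring
        by_cases hki : k = i
        · have hkj : ¬ k = j := fun h => hij (hki.symm.trans h)
          rw [if_pos hki.symm, if_neg (fun h : j = k => hkj h.symm),
            if_pos hki, if_neg hkj, hki, hdiag i, hsymm.apply i j]
          linear_combination ω * hd + A i j * hω + ω * A i j * h2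
        · by_cases hkj : k = j
          · rw [if_neg (fun h : i = k => hki h.symm), if_pos hkj.symm,
              if_pos hkj, if_neg hki, hkj, hdiag j]
            linear_combination ω * hd + A i j * hω + ω * A i j * h2
          · rw [if_neg (fun h : i = k => hki h.symm),
              if_neg (fun h : j = k => hkj h.symm), if_neg hki, if_neg hkj]
            linear_combination A i k * hb + A j k * ha + A i k * A j k * h2
      rw [Finset.sum_congr rfl (fun k _ => step k), Finset.sum_add_distrib]
      simp only [Finset.sum_ite_eq', Finset.mem_univ, if_true]
      linear_combination A i j * h2
  refine ⟨key, ?_⟩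
  -- biadditivity of the trace form
  have hneg : ∀ a : F, -a = a := by
    intro a; linear_combination (-a) * h2
  have haddl : ∀ x x' y : Fin n → F,
      (∑ k, ((x k + x' k) * y k ^ 2 + (x k + x' k) ^ 2 * y k)) =
      (∑ k, (x k * y k ^ 2 + x k ^ 2 * y k)) +
        ∑ k, (x' k * y k ^ 2 + x' k ^ 2 * y k) := by
    intro x x' y
    rw [← Finset.sum_add_distrib]
    refine Finset.sum_congr rfl fun k _ => ?_
    linear_combination (x k * x' k * y k) * h2
  have haddr : ∀ x y y' : Fin n → F,
      (∑ k, (x k * (y k + y' k) ^ 2 + x k ^ 2 * (y k + y' k))) =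
      (∑ k, (x k * y k ^ 2 + x k ^ 2 * y k)) +
        ∑ k, (x k * y' k ^ 2 + x k ^ 2 * y' k) := by
    intro x y y'
    rw [← Finset.sum_add_distrib]
    refine Finset.sum_congr rfl fun k _ => ?_
    linear_combination (x k * y k * y' k) * h2
  -- first: rows orthogonal to everything in the closure
  have step1 : ∀ y ∈ AddSubgroup.closure (Set.range fun i => fun k => M i k),
      ∀ i : Fin n, ∑ k, (M i k * y k ^ 2 + M i k ^ 2 * y k) = 0 := by
    intro y hy
    induction hy using AddSubgroup.closure_induction with
    | mem z hz =>
      obtain ⟨j, rfl⟩ := hz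
      intro i; exact key i j
    | zero => intro i; simp
    | add a b ha hb iha ihb =>
      intro i
      have := haddr (fun k => M i k) a b
      simp only [Pi.add_apply]
      rw [show (∑ k, (M i k * (a k + b k) ^ 2 + M i k ^ 2 * (a k + b k))) =
          (∑ k, (M i k * a k ^ 2 + M i k ^ 2 * a k)) +
            ∑ k, (M i k * b k ^ 2 + M i k ^ 2 * b k) from this, iha i, ihb i, add_zero]
    | neg a ha iha =>
      intro i
      have : ∀ k, (-a) k = a k := fun k => hneg (a k)
      calc (∑ k, (M i k * (-a) k ^ 2 + M i k ^ 2 * (-a) k))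
          = ∑ k, (M i k * a k ^ 2 + M i k ^ 2 * a k) :=
            Finset.sum_congr rfl fun k _ => by rw [this k]
        _ = 0 := iha i
  intro x hx y hy
  induction hx using AddSubgroup.closure_induction with
  | mem z hz =>
    obtain ⟨i, rfl⟩ := hz
    exact step1 y hy i
  | zero => simp
  | add a b ha hb iha ihb =>
    simp only [Pi.add_apply]
    rw [show (∑ k, ((a k + b k) * y k ^ 2 + (a k + b k) ^ 2 * y k)) =
        (∑ k, (a k * y k ^ 2 + a k ^ 2 * y k)) +
          ∑ k, (b k * y k ^ 2 + b k ^ 2 * y k) from haddl a b y, iha, ihb, add_zero]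
  | neg a ha iha =>
    have : ∀ k, (-a) k = a k := fun k => hneg (a k)
    calc (∑ k, ((-a) k * y k ^ 2 + (-a) k ^ 2 * y k))
        = ∑ k, (a k * y k ^ 2 + a k ^ 2 * y k) :=
          Finset.sum_congr rfl fun k _ => by rw [this k]
      _ = 0 := iha
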